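/- Let T ∈ ℝ^{nℓ×nℓ} be such that T = (I ⊗ L)(I + A)(I ⊗ Lᵀ) with L ∈ ℝ^{n×n} invertible and I + A symmetric positive definite. For any U ∈ ℝ^{n×r} with orthonormal columns and Π = I ⊗ (UUᵀ), the approximation T̂ = (I ⊗ L)(I + Π A Π)(I ⊗ Lᵀ) is symmetric positive definite. -/

import Mathlib

open Matrix Kronecker

/-- Conjugating a positive definite real matrix by an invertible matrix preserves
positive definiteness. -/
lemma posDef_conj_of_isUnit {ι : Type*} [Fintype ι] [DecidableEq ι]
    {M B : Matrix ι ι ℝ} (hM : M.PosDef) (hB : IsUnit B) : (B * M * Bᵀ).PosDef := by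
  rw [posDef_iff_dotProduct_mulVec]
  constructor
  · show (B * M * Bᵀ)ᴴ = B * M * Bᵀ
    have hconj : ∀ (C : Matrix ι ι ℝ), Cᴴ = Cᵀ := fun C => by
      ext i j; simp [conjTranspose_apply]
    have hMt : Mᵀ = M := by rw [← hconj M]; exact hM.1
    rw [hconj, transpose_mul, transpose_mul, transpose_transpose, hMt, Matrix.mul_assoc]
  · intro x hx
    have hBt : IsUnit Bᵀ := by
      rw [Matrix.isUnit_iff_isUnit_det, Matrix.det_transpose, ← Matrix.isUnit_iff_isUnit_det]
      exact hB
    have hy : Bᵀ *ᵥ x ≠ 0 := by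
      intro h
      exact hx ((Matrix.mulVec_injective_iff_isUnit.2 hBt) (by simp [h]))
    have key : star x ⬝ᵥ ((B * M * Bᵀ) *ᵥ x)
        = star (Bᵀ *ᵥ x) ⬝ᵥ (M *ᵥ (Bᵀ *ᵥ x)) := by
      have hstar : ∀ v : ι → ℝ, star v = v := fun v => by ext i; simp
      rw [hstar, hstar, ← Matrix.mulVec_mulVec, ← Matrix.mulVec_mulVec,
        Matrix.dotProduct_mulVec x B, ← Matrix.mulVec_transpose]
    rw [key]
    exact hM.dotProduct_mulVec_pos hy

theorem spd_preserving_approximation (n l r : ℕ)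
    (T A : Matrix (Fin l × Fin n) (Fin l × Fin n) ℝ)
    (L : Matrix (Fin n) (Fin n) ℝ) (hL : IsUnit L)
    (hT : T = ((1 : Matrix (Fin l) (Fin l) ℝ) ⊗ₖ L) * (1 + A) *
      ((1 : Matrix (Fin l) (Fin l) ℝ) ⊗ₖ Lᵀ))
    (hA : (1 + A).PosDef)
    (U : Matrix (Fin n) (Fin r) ℝ) (hU : Uᵀ * U = 1) :
    (((1 : Matrix (Fin l) (Fin l) ℝ) ⊗ₖ L) *
      (1 + ((1 : Matrix (Fin l) (Fin l) ℝ) ⊗ₖ (U * Uᵀ)) * A *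
        ((1 : Matrix (Fin l) (Fin l) ℝ) ⊗ₖ (U * Uᵀ))) *
      ((1 : Matrix (Fin l) (Fin l) ℝ) ⊗ₖ Lᵀ)).PosDef := by
  classical
  set P : Matrix (Fin l × Fin n) (Fin l × Fin n) ℝ :=
    (1 : Matrix (Fin l) (Fin l) ℝ) ⊗ₖ (U * Uᵀ) with hP
  have hstar : ∀ {ι : Type} (v : ι → ℝ), star v = v := fun v => by ext i; simp
  have hconj : ∀ {ι : Type} [Fintype ι] (C : Matrix ι ι ℝ), Cᴴ = Cᵀ := fun C => by
    ext i j; simp [conjTranspose_apply]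
  -- P is symmetric
  have hPsym : Pᵀ = P := by
    rw [hP, ← kroneckerMap_transpose, transpose_one, transpose_mul, transpose_transpose]
  -- P is idempotent
  have hPidem : P * P = P := by
    rw [hP, ← Matrix.mul_kronecker_mul, Matrix.one_mul]
    congr 1
    rw [Matrix.mul_assoc, ← Matrix.mul_assoc Uᵀ U Uᵀ, hU, Matrix.one_mul]
  -- A is symmetric
  have hAsym : Aᵀ = A := by
    have h1 : (1 + A)ᴴ = 1 + A := hA.1
    rw [hconj] at h1
    have := h1
    rw [transpose_add, transpose_one] at this
    exact add_left_cancel this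
  -- the middle factor is positive definite
  have hmid : (1 + P * A * P).PosDef := by
    rw [posDef_iff_dotProduct_mulVec]
    constructor
    · show (1 + P * A * P)ᴴ = _
      rw [hconj, transpose_add, transpose_one, transpose_mul, transpose_mul, hPsym, hAsym,
        Matrix.mul_assoc]
    · intro x hx
      obtain ⟨y, hy⟩ : ∃ y, P *ᵥ x = y := ⟨_, rfl⟩
      have hPy : P *ᵥ y = y := by rw [← hy, Matrix.mulVec_mulVec, hPidem]
      have hxy : y ⬝ᵥ y = x ⬝ᵥ y := by
        conv_lhs => rw [← hy]
        rw [Matrix.dotProduct_mulVec, ← Matrix.mulVec_transpose, hPsym, hy, hPy,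
          dotProduct_comm]
      have hquad : star x ⬝ᵥ ((1 + P * A * P) *ᵥ x)
          = x ⬝ᵥ x + y ⬝ᵥ (A *ᵥ y) := by
        rw [hstar, Matrix.add_mulVec, Matrix.one_mulVec, dotProduct_add]
        congr 1
        rw [← Matrix.mulVec_mulVec, ← Matrix.mulVec_mulVec, hy,
          Matrix.dotProduct_mulVec x P, ← Matrix.mulVec_transpose, hPsym, hy]
      have hsplit : x ⬝ᵥ x + y ⬝ᵥ (A *ᵥ y)
          = (x - y) ⬝ᵥ (x - y) + star y ⬝ᵥ ((1 + A) *ᵥ y) := by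
        rw [hstar, Matrix.add_mulVec, Matrix.one_mulVec, dotProduct_add]
        have hsub : (x - y) ⬝ᵥ (x - y) = x ⬝ᵥ x - y ⬝ᵥ y := by
          rw [sub_dotProduct, dotProduct_sub, dotProduct_sub, dotProduct_comm y x, ← hxy]
          ring
        rw [hsub]; ring
      rw [hquad, hsplit]
      have hnn : 0 ≤ (x - y) ⬝ᵥ (x - y) :=
        Finset.sum_nonneg fun i _ => mul_self_nonneg _
      by_cases hy0 : y = 0
      · have hxx : 0 < x ⬝ᵥ x := by
          rcases lt_or_eq_of_le (Finset.sum_nonneg fun i _ => mul_self_nonneg (x i) :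
            (0 : ℝ) ≤ x ⬝ᵥ x) with h | h
          · exact h
          · exact absurd (dotProduct_self_eq_zero.mp h.symm) hx
        have hxxy : (x - y) ⬝ᵥ (x - y) = x ⬝ᵥ x := by rw [hy0, sub_zero]
        rw [hxxy, hy0]
        simpa using hxx
      · exact add_pos_of_nonneg_of_pos hnn (hA.dotProduct_mulVec_pos hy0)
  -- conjugation
  have hBL : IsUnit ((1 : Matrix (Fin l) (Fin l) ℝ) ⊗ₖ L) := by
    have hdet : IsUnit L.det := (Matrix.isUnit_iff_isUnit_det L).mp hL
    refine IsUnit.of_mul_eq_one ((1 : Matrix (Fin l) (Fin l) ℝ) ⊗ₖ L⁻¹) ?_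
    rw [← Matrix.mul_kronecker_mul, Matrix.one_mul, Matrix.mul_nonsing_inv _ hdet,
      Matrix.one_kronecker_one]
  have hT : ((1 : Matrix (Fin l) (Fin l) ℝ) ⊗ₖ Lᵀ)
      = ((1 : Matrix (Fin l) (Fin l) ℝ) ⊗ₖ L)ᵀ := by
    rw [← kroneckerMap_transpose, transpose_one]
  rw [hT]
  exact posDef_conj_of_isUnit hmid hBL
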